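/- Let n, k, d be positive integers, μ₀ ≥ 1, β ∈ (0,1), σ₁* > 0. Let Ω ⊆ [n]×[n] be such that for every j ∈ [n] the set S_j = { i : (i,j) ∈ Ω } has exactly d elements. Let U ∈ ℝ^{n×k} have rows u_i with ‖u_i‖₂ ≤ √(5μ₀k/n), and let U* ∈ ℝ^{n×k} have rows u_i* with ‖u_i*‖₂ ≤ √(μ₀k/n). For j ∈ [n] let U_{S_j}, U*_{S_j} ∈ ℝ^{d×k} be the submatrices of U, U* whose rows are indexed by S_j; set C^j = (n/d)·U_{S_j}ᵀ U*_{S_j}, and let Ĉ^j = (n/d)·Û_jᵀ U*_{S_j} where Û_j ∈ ℝ^{d×k} is any matrix with ‖Û_j‖₂ ≤ √((2−β)d/n). Let V* ∈ ℝ^{n×k} have rows v_j* with ‖v_j*‖₂ ≤ √(μ₀k/n), and let Σ* ∈ ℝ^{k×k} satisfy ‖Σ*‖₂ ≤ σ₁*. Suppose that for every j ∈ [n], B̂^j ∈ ℝ^{k×k} is a symmetric positive definite matrix all of whose eigenvalues lie in [β, 2−β]. Then for every S ⊆ [n] and all row vectors x^1, …, x^n ∈ ℝ^{1×k} with Σ_{j∈[n]}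 ‖x^j‖₂² = 1, one has Σ_{j∈S} x^j (B̂^j)^{-1} (C^j − Ĉ^j) Σ* v_j* ≤ (7/β)·σ₁*·(μ₀k)^{3/2}·√(|S|/n). -/

import Mathlib

open Matrix
open scoped Classical

/-- Euclidean norm of a vector in `ℝ^k`. -/
noncomputable def vecNorm {k : ℕ} (v : Fin k → ℝ) : ℝ := Real.sqrt (∑ i, v i ^ 2)

/-- Spectral norm (largest singular value) of a real matrix. -/
noncomputable def specNorm {m n : ℕ} (A : Matrix (Fin m) (Fin n) ℝ) : ℝ :=
  sSup {c : ℝ | ∃ x : Fin n → ℝ, vecNorm x = 1 ∧ c = vecNorm (A.mulVec x)}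

/-- The left neighborhood `S_j = {i : (i,j) ∈ Ω}`. -/
def Sj {n : ℕ} (Ω : Finset (Fin n × Fin n)) (j : Fin n) : Finset (Fin n) :=
  Finset.univ.filter fun i => (i, j) ∈ Ω

namespace StmtHelpers

/-- The identity map into `EuclideanSpace`. -/
noncomputable def toE {k : ℕ} (v : Fin k → ℝ) : EuclideanSpace ℝ (Fin k) :=
  (WithLp.equiv 2 (Fin k → ℝ)).symm v

lemma toE_apply {k : ℕ} (v : Fin k → ℝ) (i : Fin k) : toE v i = v i := rfl

lemma toE_add {k : ℕ} (v w : Fin k → ℝ) : toE (v + w) = toE v + toE w := rfl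

lemma toE_sub {k : ℕ} (v w : Fin k → ℝ) : toE (v - w) = toE v - toE w := rfl

lemma toE_smul {k : ℕ} (c : ℝ) (v : Fin k → ℝ) : toE (c • v) = c • toE v := rfl

lemma vecNorm_nonneg {k : ℕ} (v : Fin k → ℝ) : 0 ≤ vecNorm v := Real.sqrt_nonneg _

lemma vecNorm_eq_norm {k : ℕ} (v : Fin k → ℝ) : vecNorm v = ‖toE v‖ := by
  rw [EuclideanSpace.norm_eq]
  simp only [Real.norm_eq_abs, sq_abs, toE_apply]
  rfl

lemma vecNorm_sq {k : ℕ} (v : Fin k → ℝ) : vecNorm v ^ 2 = ∑ i, v i ^ 2 :=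
  Real.sq_sqrt (Finset.sum_nonneg fun _ _ => sq_nonneg _)

lemma dot_self_eq {k : ℕ} (v : Fin k → ℝ) : v ⬝ᵥ v = vecNorm v ^ 2 := by
  rw [vecNorm_sq]
  simp [dotProduct, sq]

lemma vecNorm_zero {k : ℕ} : vecNorm (0 : Fin k → ℝ) = 0 := by
  simp [vecNorm]

lemma dot_eq_inner {k : ℕ} (v w : Fin k → ℝ) : v ⬝ᵥ w = (inner ℝ (toE v) (toE w) : ℝ) := by
  simp only [PiLp.inner_apply, RCLike.inner_apply, conj_trivial, toE_apply]
  simp [dotProduct, mul_comm]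

lemma abs_dot_le {k : ℕ} (v w : Fin k → ℝ) : |v ⬝ᵥ w| ≤ vecNorm v * vecNorm w := by
  rw [vecNorm_eq_norm v, vecNorm_eq_norm w, dot_eq_inner v w]
  exact abs_real_inner_le_norm _ _

lemma vecNorm_smul {k : ℕ} (c : ℝ) (v : Fin k → ℝ) :
    vecNorm (c • v) = |c| * vecNorm v := by
  rw [vecNorm_eq_norm, vecNorm_eq_norm, toE_smul, norm_smul, Real.norm_eq_abs]

lemma vecNorm_add_le {k : ℕ} (v w : Fin k → ℝ) : vecNorm (v + w) ≤ vecNorm v + vecNorm w := by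
  rw [vecNorm_eq_norm, vecNorm_eq_norm, vecNorm_eq_norm, toE_add]
  exact norm_add_le _ _

lemma vecNorm_sub_le {k : ℕ} (v w : Fin k → ℝ) : vecNorm (v - w) ≤ vecNorm v + vecNorm w := by
  rw [vecNorm_eq_norm, vecNorm_eq_norm, vecNorm_eq_norm, toE_sub]
  exact norm_sub_le _ _

lemma vecNorm_sum_le {k : ℕ} {ι : Type*} (s : Finset ι) (f : ι → (Fin k → ℝ)) :
    vecNorm (∑ i ∈ s, f i) ≤ ∑ i ∈ s, vecNorm (f i) := by
  classical
  induction s using Finset.induction_on with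
  | empty => simp [vecNorm_zero]
  | insert _ _ h ih =>
    rw [Finset.sum_insert h, Finset.sum_insert h]
    exact (vecNorm_add_le _ _).trans (by linarith)

lemma vecNorm_eq_zero {k : ℕ} {y : Fin k → ℝ} (h : vecNorm y = 0) : y = 0 := by
  rw [vecNorm_eq_norm] at h
  have h2 : toE y = 0 := norm_eq_zero.mp h
  funext i
  have := congrFun (congrArg (fun (z : EuclideanSpace ℝ (Fin k)) => (z : Fin k → ℝ)) h2) i
  simpa [toE] using this

set_option maxHeartbeats 2000000 in
lemma mulVec_frob {m k : ℕ} (A : Matrix (Fin m) (Fin k) ℝ) (y : Fin k → ℝ) :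
    vecNorm (A.mulVec y) ≤ Real.sqrt (∑ i, vecNorm (A i) ^ 2) * vecNorm y := by
  have h1 : ∑ i, (A.mulVec y) i ^ 2 ≤ (∑ i, vecNorm (A i) ^ 2) * vecNorm y ^ 2 := by
    rw [Finset.sum_mul]
    refine Finset.sum_le_sum fun i _ => ?_
    have h2 : |A i ⬝ᵥ y| ≤ vecNorm (A i) * vecNorm y := abs_dot_le _ _
    have h3 : (A.mulVec y) i = A i ⬝ᵥ y := rfl
    rw [h3, ← sq_abs]
    nlinarith [abs_nonneg (A i ⬝ᵥ y), vecNorm_nonneg (A i), vecNorm_nonneg y]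
  have h4 := Real.sqrt_le_sqrt h1
  rw [Real.sqrt_mul (by positivity) (vecNorm y ^ 2), Real.sqrt_sq (vecNorm_nonneg _)] at h4
  exact h4

lemma bddAbove_specSet {m k : ℕ} (A : Matrix (Fin m) (Fin k) ℝ) :
    BddAbove {c : ℝ | ∃ x : Fin k → ℝ, vecNorm x = 1 ∧ c = vecNorm (A.mulVec x)} := by
  refine ⟨Real.sqrt (∑ i, vecNorm (A i) ^ 2), ?_⟩
  rintro c ⟨x, hx, rfl⟩
  have h := mulVec_frob A x
  rwa [hx, mul_one] at h

lemma specNorm_mulVec {m k : ℕ} (A : Matrix (Fin m) (Fin k) ℝ) {c : ℝ}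
    (h : specNorm A ≤ c) (y : Fin k → ℝ) : vecNorm (A.mulVec y) ≤ c * vecNorm y := by
  rcases eq_or_ne (vecNorm y) 0 with h0 | h0
  · have hy : y = 0 := vecNorm_eq_zero h0
    simp [hy, Matrix.mulVec_zero, vecNorm_zero]
  · set u := (vecNorm y)⁻¹ • y with hu
    have hun : vecNorm u = 1 := by
      rw [hu, vecNorm_smul, abs_inv, abs_of_nonneg (vecNorm_nonneg y), inv_mul_cancel₀ h0]
    have hmem : vecNorm (A.mulVec u) ∈
        {c : ℝ | ∃ x : Fin k → ℝ, vecNorm x = 1 ∧ c = vecNorm (A.mulVec x)} := ⟨u, hun, rfl⟩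
    have h1 : vecNorm (A.mulVec u) ≤ c := (le_csSup (bddAbove_specSet A) hmem).trans h
    have h2 : A.mulVec y = vecNorm y • A.mulVec u := by
      rw [hu, Matrix.mulVec_smul, smul_smul, mul_inv_cancel₀ h0, one_smul]
    rw [h2, vecNorm_smul, abs_of_nonneg (vecNorm_nonneg y)]
    calc vecNorm y * vecNorm (A.mulVec u) ≤ vecNorm y * c :=
          mul_le_mul_of_nonneg_left h1 (vecNorm_nonneg y)
      _ = c * vecNorm y := mul_comm _ _

lemma transpose_bound {m k : ℕ} (A : Matrix (Fin m) (Fin k) ℝ) {c : ℝ} (hc : 0 ≤ c)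
    (h : ∀ y, vecNorm (A.mulVec y) ≤ c * vecNorm y) (w : Fin m → ℝ) :
    vecNorm (Aᵀ.mulVec w) ≤ c * vecNorm w := by
  set z := Aᵀ.mulVec w with hz
  have h1 : z ⬝ᵥ z = w ⬝ᵥ A.mulVec z := by
    rw [hz, Matrix.mulVec_transpose, Matrix.dotProduct_mulVec]
  have key : vecNorm z ^ 2 ≤ vecNorm w * (c * vecNorm z) := by
    rw [← dot_self_eq, h1]
    calc w ⬝ᵥ A.mulVec z ≤ |w ⬝ᵥ A.mulVec z| := le_abs_self _
      _ ≤ vecNorm w * vecNorm (A.mulVec z) := abs_dot_le _ _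
      _ ≤ vecNorm w * (c * vecNorm z) :=
          mul_le_mul_of_nonneg_left (h z) (vecNorm_nonneg w)
  rcases eq_or_lt_of_le (vecNorm_nonneg z) with h0 | h0
  · rw [← h0]
    exact mul_nonneg hc (vecNorm_nonneg w)
  · nlinarith [vecNorm_nonneg w]

lemma posdef_inv_bound {k : ℕ} {B : Matrix (Fin k) (Fin k) ℝ} (hB : B.IsHermitian)
    (hBp : B.PosDef) {β : ℝ} (hβ : 0 < β) (heig : ∀ l, β ≤ hB.eigenvalues l)
    (y : Fin k → ℝ) :
    vecNorm (B⁻¹.mulVec y) ≤ (1 / β) * vecNorm y := by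
  have hps : (B - β • 1).PosSemidef := by
    have hsp := hB.spectral_theorem
    rw [Unitary.conjStarAlgAut_apply, Matrix.star_eq_conjTranspose] at hsp
    set V : Matrix (Fin k) (Fin k) ℝ :=
      (Matrix.IsHermitian.eigenvectorUnitary hB : Matrix (Fin k) (Fin k) ℝ) with hV
    have hVu : V * Vᴴ = 1 := by
      have h := (Matrix.mem_unitaryGroup_iff).mp (Matrix.IsHermitian.eigenvectorUnitary hB).2
      rwa [Matrix.star_eq_conjTranspose] at h
    have hdiag : (Matrix.diagonal (RCLike.ofReal ∘ hB.eigenvalues) : Matrix (Fin k) (Fin k) ℝ)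
        - β • 1 = Matrix.diagonal (fun i => hB.eigenvalues i - β) := by
      ext i j
      rcases eq_or_ne i j with rfl | hij
      · simp [Matrix.diagonal_apply_eq, Matrix.one_apply_eq]
      · simp [Matrix.diagonal_apply_ne _ hij, Matrix.one_apply_ne hij]
    have key : B - β • 1 = V * Matrix.diagonal (fun i => hB.eigenvalues i - β) * Vᴴ := by
      have h2 : V * Matrix.diagonal (fun i => hB.eigenvalues i - β) * Vᴴ
          = V * (Matrix.diagonal (RCLike.ofReal ∘ hB.eigenvalues)) * Vᴴ - β • (V * Vᴴ) := by
        rw [← hdiag, mul_sub, sub_mul, mul_smul_comm, smul_mul_assoc, mul_one]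
      rw [h2, hVu, ← hsp]
    rw [key]
    exact (Matrix.posSemidef_diagonal_iff.mpr
      fun i => sub_nonneg.mpr (heig i)).mul_mul_conjTranspose_same V
  have hquad : ∀ z : Fin k → ℝ, β * vecNorm z ≤ vecNorm (B.mulVec z) := by
    intro z
    have h1 : 0 ≤ z ⬝ᵥ ((B - β • 1).mulVec z) := by
      have h := hps.dotProduct_mulVec_nonneg z
      simpa using h
    rw [Matrix.sub_mulVec, Matrix.smul_mulVec, Matrix.one_mulVec, dotProduct_sub,
      dotProduct_smul] at h1
    have h2 : β * vecNorm z ^ 2 ≤ z ⬝ᵥ B.mulVec z := by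
      have h3 : β • (z ⬝ᵥ z) ≤ z ⬝ᵥ B.mulVec z := by linarith [sub_nonneg.mp h1]
      rwa [smul_eq_mul, dot_self_eq] at h3
    have h3 : z ⬝ᵥ B.mulVec z ≤ vecNorm z * vecNorm (B.mulVec z) :=
      (le_abs_self _).trans (abs_dot_le _ _)
    rcases eq_or_lt_of_le (vecNorm_nonneg z) with h0 | h0
    · rw [← h0, mul_zero]
      exact vecNorm_nonneg _
    · nlinarith
  have hdet : IsUnit B.det := hBp.det_pos.ne'.isUnit
  have hBB : B.mulVec (B⁻¹.mulVec y) = y := by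
    rw [Matrix.mulVec_mulVec, Matrix.mul_nonsing_inv _ hdet, Matrix.one_mulVec]
  have h := hquad (B⁻¹.mulVec y)
  rw [hBB] at h
  calc vecNorm (B⁻¹.mulVec y) = (1 / β) * (β * vecNorm (B⁻¹.mulVec y)) := by
        field_simp
    _ ≤ (1 / β) * vecNorm y := mul_le_mul_of_nonneg_left h (by positivity)

lemma vecMulVec_mulVec' {m k : ℕ} (a : Fin m → ℝ) (b y : Fin k → ℝ) :
    (vecMulVec a b).mulVec y = (b ⬝ᵥ y) • a := by
  funext i
  simp only [Matrix.mulVec, Matrix.vecMulVec_apply, dotProduct, Pi.smul_apply, smul_eq_mul]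
  rw [Finset.sum_mul]
  exact Finset.sum_congr rfl fun j _ => by ring

lemma sum_mulVec' {m k : ℕ} {ι : Type*} (s : Finset ι) (f : ι → Matrix (Fin m) (Fin k) ℝ)
    (y : Fin k → ℝ) : (∑ i ∈ s, f i).mulVec y = ∑ i ∈ s, (f i).mulVec y := by
  classical
  induction s using Finset.induction_on with
  | empty => simp [Matrix.zero_mulVec]
  | insert _ _ h ih => rw [Finset.sum_insert h, Finset.sum_insert h, Matrix.add_mulVec, ih]

end StmtHelpers

open StmtHelpers

set_option maxHeartbeats 2000000 in
theorem stmt_6 {n k d : ℕ} (hn : 0 < n) (hk : 0 < k) (hd : 0 < d)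
    (μ₀ β σ₁ : ℝ) (hμ : 1 ≤ μ₀) (hβ : β ∈ Set.Ioo (0 : ℝ) 1) (hσ₁ : 0 < σ₁)
    (Ω : Finset (Fin n × Fin n)) (hΩ : ∀ j : Fin n, (Sj Ω j).card = d)
    -- `e j` enumerates the rows of the submatrices indexed by `S_j`
    (e : Fin n → Fin d → Fin n)
    (he_inj : ∀ j, Function.Injective (e j))
    (he_mem : ∀ j r, e j r ∈ Sj Ω j)
    (U Ustar : Matrix (Fin n) (Fin k) ℝ)
    (hrows : ∀ i, vecNorm (U i) ≤ Real.sqrt (5 * μ₀ * k / n))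
    (hrowsStar : ∀ i, vecNorm (Ustar i) ≤ Real.sqrt (μ₀ * k / n))
    -- the truncated submatrices and their spectral-norm bounds
    (Uhatd : Fin n → Matrix (Fin d) (Fin k) ℝ)
    (hUhatd : ∀ j, specNorm (Uhatd j) ≤ Real.sqrt ((2 - β) * d / n))
    (Vstar : Matrix (Fin n) (Fin k) ℝ)
    (hVrows : ∀ j, vecNorm (Vstar j) ≤ Real.sqrt (μ₀ * k / n))
    (Sig : Matrix (Fin k) (Fin k) ℝ) (hSig : specNorm Sig ≤ σ₁)
    (Bhat : Fin n → Matrix (Fin k) (Fin k) ℝ)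
    (hBherm : ∀ j, (Bhat j).IsHermitian)
    (hBpos : ∀ j, (Bhat j).PosDef)
    (heig : ∀ j l, (hBherm j).eigenvalues l ∈ Set.Icc β (2 - β))
    (x : Fin n → Fin k → ℝ) (hx : ∑ j, vecNorm (x j) ^ 2 = 1)
    (S : Finset (Fin n)) :
    ∑ j ∈ S, x j ⬝ᵥ
        (((Bhat j)⁻¹ *
            (((n : ℝ) / d) • ∑ i ∈ Sj Ω j, vecMulVec (U i) (Ustar i) -
              ((n : ℝ) / d) • ((Uhatd j)ᵀ * Matrix.of fun r l => Ustar (e j r) l)) *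
            Sig).mulVec (Vstar j))
      ≤ (7 / β) * σ₁ * (μ₀ * k) ^ ((3 : ℝ) / 2) * Real.sqrt ((S.card : ℝ) / n) := by
  classical
  obtain ⟨hβ0, hβ1⟩ := hβ
  have hn0 : (0:ℝ) < n := by exact_mod_cast hn
  have hd0 : (0:ℝ) < d := by exact_mod_cast hd
  have hnne : (n:ℝ) ≠ 0 := hn0.ne'
  have hdne : (d:ℝ) ≠ 0 := hd0.ne'
  have hk1 : (1:ℝ) ≤ (k:ℝ) := by exact_mod_cast hk
  have hμk : (1:ℝ) ≤ μ₀ * k := by nlinarith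
  have hμk0 : (0:ℝ) < μ₀ * k := lt_of_lt_of_le one_pos hμk
  have hμkn0 : (0:ℝ) < μ₀ * k / n := div_pos hμk0 hn0
  have h2β : (0:ℝ) < 2 - β := by linarith
  set ρ : ℝ := Real.sqrt (μ₀ * k / n) with hρ
  have hρ0 : 0 ≤ ρ := Real.sqrt_nonneg _
  set K : ℝ := (1/β) * ((Real.sqrt 5 + Real.sqrt 2) * (μ₀ * k) * (σ₁ * ρ)) with hK
  have hK0 : 0 ≤ K := by
    apply mul_nonneg (one_div_nonneg.mpr hβ0.le)
    apply mul_nonneg (mul_nonneg (add_nonneg (Real.sqrt_nonneg _) (Real.sqrt_nonneg _)) hμk0.le)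
    exact mul_nonneg hσ₁.le hρ0
  -- the per-term bound
  have hterm : ∀ j : Fin n, x j ⬝ᵥ
      (((Bhat j)⁻¹ *
          (((n : ℝ) / d) • ∑ i ∈ Sj Ω j, vecMulVec (U i) (Ustar i) -
            ((n : ℝ) / d) • ((Uhatd j)ᵀ * Matrix.of fun r l => Ustar (e j r) l)) *
          Sig).mulVec (Vstar j)) ≤ vecNorm (x j) * K := by
    intro j
    rw [← Matrix.mulVec_mulVec, ← Matrix.mulVec_mulVec]
    set w1 := Sig.mulVec (Vstar j) with hw1
    have hw1n : vecNorm w1 ≤ σ₁ * ρ := by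
      refine (specNorm_mulVec Sig hSig _).trans ?_
      exact mul_le_mul_of_nonneg_left (hVrows j) hσ₁.le
    -- bound for the `C` part
    have hCb : vecNorm (((((n:ℝ)/d) • ∑ i ∈ Sj Ω j, vecMulVec (U i) (Ustar i))).mulVec w1)
        ≤ Real.sqrt 5 * (μ₀ * k) * vecNorm w1 := by
      rw [Matrix.smul_mulVec, sum_mulVec', vecNorm_smul,
        abs_of_nonneg (by positivity : (0:ℝ) ≤ (n:ℝ)/d)]
      have hbound : vecNorm (∑ i ∈ Sj Ω j, (vecMulVec (U i) (Ustar i)).mulVec w1)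
          ≤ (d:ℝ) * (Real.sqrt (μ₀ * k / n) * vecNorm w1 * Real.sqrt (5 * μ₀ * k / n)) := by
        refine (vecNorm_sum_le _ _).trans ?_
        have hper : ∀ i ∈ Sj Ω j, vecNorm ((vecMulVec (U i) (Ustar i)).mulVec w1)
            ≤ Real.sqrt (μ₀ * k / n) * vecNorm w1 * Real.sqrt (5 * μ₀ * k / n) := by
          intro i _
          rw [vecMulVec_mulVec', vecNorm_smul]
          have h1 : |Ustar i ⬝ᵥ w1| ≤ Real.sqrt (μ₀ * k / n) * vecNorm w1 := by
            refine (abs_dot_le _ _).trans ?_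
            exact mul_le_mul_of_nonneg_right (hrowsStar i) (vecNorm_nonneg _)
          exact mul_le_mul h1 (hrows i) (vecNorm_nonneg _)
            (mul_nonneg (Real.sqrt_nonneg _) (vecNorm_nonneg _))
        refine (Finset.sum_le_sum hper).trans ?_
        rw [Finset.sum_const, hΩ j, nsmul_eq_mul]
      refine (mul_le_mul_of_nonneg_left hbound (by positivity : (0:ℝ) ≤ (n:ℝ)/d)).trans
        (le_of_eq ?_)
      have hsq : Real.sqrt (μ₀ * k / n) * Real.sqrt (5 * μ₀ * k / n)
          = Real.sqrt 5 * (μ₀ * k / n) := by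
        rw [show (5:ℝ) * μ₀ * (k:ℝ) / n = 5 * (μ₀ * k / n) by ring,
          Real.sqrt_mul (by norm_num : (0:ℝ) ≤ 5)]
        rw [mul_comm (Real.sqrt (μ₀ * (k:ℝ) / n)), mul_assoc,
          Real.mul_self_sqrt hμkn0.le]
      calc ((n:ℝ)/d) * ((d:ℝ) * (Real.sqrt (μ₀ * k / n) * vecNorm w1 * Real.sqrt (5 * μ₀ * k / n)))
          = ((n:ℝ)/d) * (d:ℝ) * (Real.sqrt (μ₀ * k / n) * Real.sqrt (5 * μ₀ * k / n)) * vecNorm w1 := by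
            ring
        _ = ((n:ℝ)/d) * (d:ℝ) * (Real.sqrt 5 * (μ₀ * k / n)) * vecNorm w1 := by rw [hsq]
        _ = Real.sqrt 5 * (μ₀ * k) * vecNorm w1 := by
            field_simp
            try ring
    -- bound for the `Ĉ` part
    have hChatb : vecNorm ((((n:ℝ)/d) • ((Uhatd j)ᵀ * Matrix.of fun r l => Ustar (e j r) l)).mulVec w1)
        ≤ Real.sqrt 2 * (μ₀ * k) * vecNorm w1 := by
      rw [Matrix.smul_mulVec, vecNorm_smul,
        abs_of_nonneg (by positivity : (0:ℝ) ≤ (n:ℝ)/d), ← Matrix.mulVec_mulVec]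
      have hM : vecNorm ((Matrix.of fun r l => Ustar (e j r) l).mulVec w1)
          ≤ Real.sqrt ((d:ℝ) * (μ₀ * k / n)) * vecNorm w1 := by
        refine (mulVec_frob _ _).trans ?_
        refine mul_le_mul_of_nonneg_right ?_ (vecNorm_nonneg _)
        refine Real.sqrt_le_sqrt ?_
        have hrow : ∀ rr : Fin d,
            vecNorm ((Matrix.of fun r l => Ustar (e j r) l) rr) ^ 2 ≤ μ₀ * k / n := by
          intro rr
          have h1 : vecNorm ((Matrix.of fun r l => Ustar (e j r) l) rr)
              = vecNorm (Ustar (e j rr)) := rfl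
          rw [h1]
          have h2 := hrowsStar (e j rr)
          have h4 : vecNorm (Ustar (e j rr)) ^ 2 ≤ Real.sqrt (μ₀ * k / n) ^ 2 :=
            pow_le_pow_left₀ (vecNorm_nonneg _) h2 2
          rwa [Real.sq_sqrt hμkn0.le] at h4
        calc ∑ rr, vecNorm ((Matrix.of fun r l => Ustar (e j r) l) rr) ^ 2
            ≤ ∑ _rr : Fin d, (μ₀ * (k:ℝ) / n) := Finset.sum_le_sum fun rr _ => hrow rr
          _ = (d:ℝ) * (μ₀ * k / n) := by
              simp [Finset.sum_const, Finset.card_univ, nsmul_eq_mul]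
      have hT : vecNorm ((Uhatd j)ᵀ.mulVec ((Matrix.of fun r l => Ustar (e j r) l).mulVec w1))
          ≤ Real.sqrt ((2-β)*d/n) * (Real.sqrt ((d:ℝ) * (μ₀ * k / n)) * vecNorm w1) := by
        refine (transpose_bound (Uhatd j) (Real.sqrt_nonneg _)
          (specNorm_mulVec _ (hUhatd j)) _).trans ?_
        exact mul_le_mul_of_nonneg_left hM (Real.sqrt_nonneg _)
      refine (mul_le_mul_of_nonneg_left hT (by positivity : (0:ℝ) ≤ (n:ℝ)/d)).trans ?_
      have hsq2 : Real.sqrt ((2-β)*d/n) * Real.sqrt ((d:ℝ) * (μ₀ * k / n))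
          = ((d:ℝ)/n) * Real.sqrt ((2-β) * (μ₀ * k)) := by
        rw [← Real.sqrt_mul (div_nonneg (mul_nonneg h2β.le hd0.le) hn0.le)]
        rw [show ((2-β)*(d:ℝ)/n) * ((d:ℝ) * (μ₀ * k / n)) = ((d:ℝ)/n)^2 * ((2-β) * (μ₀ * k)) by
          ring]
        rw [Real.sqrt_mul (sq_nonneg _), Real.sqrt_sq (div_nonneg hd0.le hn0.le)]
      have hle : Real.sqrt ((2-β) * (μ₀ * k)) ≤ Real.sqrt 2 * (μ₀ * k) := by
        have h1 : Real.sqrt ((2-β) * (μ₀ * k)) ≤ Real.sqrt (2 * (μ₀ * k)) :=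
          Real.sqrt_le_sqrt (by nlinarith)
        rw [Real.sqrt_mul (by norm_num : (0:ℝ) ≤ 2)] at h1
        refine h1.trans (mul_le_mul_of_nonneg_left ?_ (Real.sqrt_nonneg 2))
        have h2 := Real.sqrt_le_sqrt (show μ₀ * (k:ℝ) ≤ (μ₀ * k)^2 by nlinarith)
        rwa [Real.sqrt_sq hμk0.le] at h2
      calc ((n:ℝ)/d) * (Real.sqrt ((2-β)*d/n) * (Real.sqrt ((d:ℝ) * (μ₀ * k / n)) * vecNorm w1))
          = (Real.sqrt ((2-β)*d/n) * Real.sqrt ((d:ℝ) * (μ₀ * k / n))) * (((n:ℝ)/d) * vecNorm w1) := by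
            ring
        _ = (((d:ℝ)/n) * Real.sqrt ((2-β) * (μ₀ * k))) * (((n:ℝ)/d) * vecNorm w1) := by rw [hsq2]
        _ = Real.sqrt ((2-β) * (μ₀ * k)) * vecNorm w1 := by
            field_simp
            try ring
        _ ≤ Real.sqrt 2 * (μ₀ * k) * vecNorm w1 :=
            mul_le_mul_of_nonneg_right hle (vecNorm_nonneg _)
    -- difference bound
    have hw2 : vecNorm (((((n:ℝ)/d) • ∑ i ∈ Sj Ω j, vecMulVec (U i) (Ustar i)) -
        ((n:ℝ)/d) • ((Uhatd j)ᵀ * Matrix.of fun r l => Ustar (e j r) l)).mulVec w1)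
        ≤ (Real.sqrt 5 + Real.sqrt 2) * (μ₀ * k) * (σ₁ * ρ) := by
      rw [Matrix.sub_mulVec]
      refine (vecNorm_sub_le _ _).trans ?_
      have := add_le_add hCb hChatb
      have h5 : Real.sqrt 5 * (μ₀ * k) * vecNorm w1 + Real.sqrt 2 * (μ₀ * k) * vecNorm w1
          = (Real.sqrt 5 + Real.sqrt 2) * (μ₀ * k) * vecNorm w1 := by ring
      rw [h5] at this
      refine this.trans ?_
      exact mul_le_mul_of_nonneg_left hw1n
        (mul_nonneg (add_nonneg (Real.sqrt_nonneg _) (Real.sqrt_nonneg _)) hμk0.le)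
    -- inverse bound
    have hw3 : vecNorm ((Bhat j)⁻¹.mulVec (((((n:ℝ)/d) • ∑ i ∈ Sj Ω j, vecMulVec (U i) (Ustar i)) -
        ((n:ℝ)/d) • ((Uhatd j)ᵀ * Matrix.of fun r l => Ustar (e j r) l)).mulVec w1)) ≤ K := by
      refine (posdef_inv_bound (hBherm j) (hBpos j) hβ0 (fun l => (heig j l).1) _).trans ?_
      rw [hK]
      exact mul_le_mul_of_nonneg_left hw2 (one_div_nonneg.mpr hβ0.le)
    calc x j ⬝ᵥ ((Bhat j)⁻¹.mulVec (((((n:ℝ)/d) • ∑ i ∈ Sj Ω j, vecMulVec (U i) (Ustar i)) -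
          ((n:ℝ)/d) • ((Uhatd j)ᵀ * Matrix.of fun r l => Ustar (e j r) l)).mulVec w1))
        ≤ |x j ⬝ᵥ ((Bhat j)⁻¹.mulVec (((((n:ℝ)/d) • ∑ i ∈ Sj Ω j, vecMulVec (U i) (Ustar i)) -
          ((n:ℝ)/d) • ((Uhatd j)ᵀ * Matrix.of fun r l => Ustar (e j r) l)).mulVec w1))| :=
          le_abs_self _
      _ ≤ vecNorm (x j) * vecNorm ((Bhat j)⁻¹.mulVec (((((n:ℝ)/d) •
            ∑ i ∈ Sj Ω j, vecMulVec (U i) (Ustar i)) -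
            ((n:ℝ)/d) • ((Uhatd j)ᵀ * Matrix.of fun r l => Ustar (e j r) l)).mulVec w1)) :=
          abs_dot_le _ _
      _ ≤ vecNorm (x j) * K := mul_le_mul_of_nonneg_left hw3 (vecNorm_nonneg _)
  -- sum the per-term bounds
  have hxS : ∑ j ∈ S, vecNorm (x j) ^ 2 ≤ 1 := by
    rw [← hx]
    exact Finset.sum_le_sum_of_subset_of_nonneg (Finset.subset_univ S)
      (fun i _ _ => sq_nonneg _)
  have hsumS : ∑ j ∈ S, vecNorm (x j) ≤ Real.sqrt (S.card : ℝ) := by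
    have h1 : (∑ j ∈ S, vecNorm (x j)) ^ 2 ≤ (S.card : ℝ) * ∑ j ∈ S, vecNorm (x j) ^ 2 :=
      sq_sum_le_card_mul_sum_sq
    have h2 : (∑ j ∈ S, vecNorm (x j)) ^ 2 ≤ (S.card : ℝ) := by
      refine h1.trans ?_
      calc (S.card : ℝ) * ∑ j ∈ S, vecNorm (x j) ^ 2 ≤ (S.card : ℝ) * 1 :=
            mul_le_mul_of_nonneg_left hxS (Nat.cast_nonneg _)
        _ = (S.card : ℝ) := mul_one _
    have h3 := Real.sqrt_le_sqrt h2
    rwa [Real.sqrt_sq (Finset.sum_nonneg fun j _ => vecNorm_nonneg _)] at h3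
  have hpow : (μ₀ * k) ^ ((3:ℝ)/2) = (μ₀ * k) * Real.sqrt (μ₀ * k) := by
    rw [show ((3:ℝ)/2) = (1:ℝ) + 1/2 by norm_num, Real.rpow_add hμk0, Real.rpow_one,
      Real.sqrt_eq_rpow]
  have hsplit : ρ * Real.sqrt (S.card : ℝ) = Real.sqrt (μ₀ * k) * Real.sqrt ((S.card:ℝ)/n) := by
    rw [hρ, ← Real.sqrt_mul hμkn0.le, ← Real.sqrt_mul hμk0.le]
    congr 1
    ring
  have h7 : Real.sqrt 5 + Real.sqrt 2 ≤ 7 := by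
    have h9 : Real.sqrt 9 = 3 := by
      rw [show (9:ℝ) = 3^2 by norm_num, Real.sqrt_sq (by norm_num : (0:ℝ) ≤ 3)]
    have h4 : Real.sqrt 4 = 2 := by
      rw [show (4:ℝ) = 2^2 by norm_num, Real.sqrt_sq (by norm_num : (0:ℝ) ≤ 2)]
    have h5 : Real.sqrt 5 ≤ 3 := by
      rw [← h9]; exact Real.sqrt_le_sqrt (by norm_num)
    have h2' : Real.sqrt 2 ≤ 2 := by
      have h24 := Real.sqrt_le_sqrt (show (2:ℝ) ≤ 4 by norm_num)
      rwa [h4] at h24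
    linarith
  have hX : (0:ℝ) ≤ (μ₀ * k) * Real.sqrt (μ₀ * k) :=
    mul_nonneg hμk0.le (Real.sqrt_nonneg _)
  calc ∑ j ∈ S, x j ⬝ᵥ
        (((Bhat j)⁻¹ *
            (((n : ℝ) / d) • ∑ i ∈ Sj Ω j, vecMulVec (U i) (Ustar i) -
              ((n : ℝ) / d) • ((Uhatd j)ᵀ * Matrix.of fun r l => Ustar (e j r) l)) *
            Sig).mulVec (Vstar j))
      ≤ ∑ j ∈ S, vecNorm (x j) * K := Finset.sum_le_sum fun j _ => hterm j
    _ = (∑ j ∈ S, vecNorm (x j)) * K := (Finset.sum_mul _ _ _).symm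
    _ ≤ Real.sqrt (S.card : ℝ) * K := mul_le_mul_of_nonneg_right hsumS hK0
    _ = ((Real.sqrt 5 + Real.sqrt 2)/β) * σ₁ * ((μ₀ * k) * Real.sqrt (μ₀ * k)) *
          Real.sqrt ((S.card:ℝ)/n) := by
        rw [hK, hρ] at *
        linear_combination ((Real.sqrt 5 + Real.sqrt 2) * (μ₀ * (k:ℝ)) * σ₁ / β) * hsplit
    _ ≤ (7/β) * σ₁ * ((μ₀ * k) * Real.sqrt (μ₀ * k)) * Real.sqrt ((S.card:ℝ)/n) := by
        refine mul_le_mul_of_nonneg_right ?_ (Real.sqrt_nonneg _)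
        refine mul_le_mul_of_nonneg_right ?_ hX
        refine mul_le_mul_of_nonneg_right ?_ hσ₁.le
        exact (div_le_div_iff_of_pos_right hβ0).mpr h7
    _ = (7 / β) * σ₁ * (μ₀ * k) ^ ((3 : ℝ) / 2) * Real.sqrt ((S.card : ℝ) / n) := by
        rw [hpow]
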